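/- Let d_{z,c} : (0,∞) → ℝ be defined by d_{z,c}(σ) = z/(1 + cσ^{-2}) for parameters z > 0 and c > 0. Then d_{z,c} has a fixed point in (0,∞) if and only if z² ≥ 4c; if z² > 4c the fixed points are exactly f_± = (z ± √(z² − 4c))/2, the larger one f₊ satisfies |d'_{z,c}(f₊)| < 1 (attractive), and the smaller one f₋ satisfies |d'_{z,c}(f₋)| > 1 (repelling); if z² = 4c the unique fixed point is σ = z/2 = c/σ, i.e. σ² = c, and at every attractive fixed point σ one has (1 + cσ^{-2})^{-1} ≥ 1/2. -/

import Mathlib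

/-- fixed-point analysis of the SALSA filter map
`d(σ) = z/(1 + c σ⁻²)` for `z, c > 0`. -/
theorem stmt15 (z c : ℝ) (hz : 0 < z) (hc : 0 < c) :
    let d : ℝ → ℝ := fun σ => z / (1 + c / σ ^ 2)
    let fp : ℝ := (z + Real.sqrt (z ^ 2 - 4 * c)) / 2
    let fm : ℝ := (z - Real.sqrt (z ^ 2 - 4 * c)) / 2
    -- existence of a positive fixed point iff z² ≥ 4c
    ((∃ σ : ℝ, 0 < σ ∧ d σ = σ) ↔ z ^ 2 ≥ 4 * c) ∧
    -- if z² > 4c, the fixed points are exactly f₊ and f₋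
    (z ^ 2 > 4 * c → ∀ σ : ℝ, 0 < σ → (d σ = σ ↔ σ = fp ∨ σ = fm)) ∧
    -- f₊ is attractive, f₋ is repelling
    (z ^ 2 > 4 * c → |deriv d fp| < 1 ∧ |deriv d fm| > 1) ∧
    -- degenerate case z² = 4c: unique fixed point σ = z/2 with σ² = c
    (z ^ 2 = 4 * c → (∀ σ : ℝ, 0 < σ → (d σ = σ ↔ σ = z / 2)) ∧ (z / 2) ^ 2 = c) ∧
    -- at every attractive fixed point the filter value is at least 1/2
    (∀ σ : ℝ, 0 < σ → d σ = σ → |deriv d σ| ≤ 1 → (1 / 2 : ℝ) ≤ (1 + c / σ ^ 2)⁻¹) := by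
  intro d fp fm
  -- basic characterization of fixed points
  have hfix : ∀ σ : ℝ, 0 < σ → (d σ = σ ↔ z * σ = σ ^ 2 + c) := by
    intro σ hσ
    have hσ0 : σ ≠ 0 := ne_of_gt hσ
    have hden : 1 + c / σ ^ 2 > 0 := by positivity
    simp only [d]
    rw [div_eq_iff (ne_of_gt hden)]
    constructor
    · intro h
      have := h
      field_simp at this
      nlinarith [this]
    · intro h
      field_simp
      nlinarith [h]
  -- derivative formula
  have hderiv : ∀ σ : ℝ, 0 < σ → deriv d σ = 2 * z * c * σ / (σ ^ 2 + c) ^ 2 := by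
    intro σ hσ
    have hσ0 : σ ≠ 0 := ne_of_gt hσ
    have hdg : ∀ x : ℝ, x ^ 2 + c ≠ 0 := by intro x; positivity
    have hg : HasDerivAt (fun x : ℝ => z * x ^ 2 / (x ^ 2 + c))
        ((2 * z * σ * (σ ^ 2 + c) - z * σ ^ 2 * (2 * σ)) / (σ ^ 2 + c) ^ 2) σ := by
      have hu : HasDerivAt (fun x : ℝ => z * x ^ 2) (2 * z * σ) σ := by
        have := (hasDerivAt_pow 2 σ).const_mul z
        simpa [mul_comm, mul_assoc, mul_left_comm] using this
      have hv : HasDerivAt (fun x : ℝ => x ^ 2 + c) (2 * σ) σ := by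
        have := (hasDerivAt_pow 2 σ).add_const c
        simpa using this
      exact hu.div hv (hdg σ)
    have heq : d =ᶠ[nhds σ] fun x : ℝ => z * x ^ 2 / (x ^ 2 + c) := by
      filter_upwards [eventually_ne_nhds hσ0] with x hx
      have hx2 : x ^ 2 ≠ 0 := pow_ne_zero 2 hx
      simp only [d]
      field_simp
    rw [heq.deriv_eq, hg.deriv]
    ring
  -- derivative at a fixed point
  have hderivfix : ∀ σ : ℝ, 0 < σ → z * σ = σ ^ 2 + c →
      deriv d σ = 2 * c / (σ ^ 2 + c) := by
    intro σ hσ hf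
    rw [hderiv σ hσ]
    have h1 : (σ ^ 2 + c) ≠ 0 := by positivity
    rw [div_eq_div_iff (by positivity) h1]
    linear_combination 2 * c * (σ ^ 2 + c) * hf
  refine ⟨?_, ?_, ?_, ?_, ?_⟩
  · -- existence iff
    constructor
    · rintro ⟨σ, hσ, hdσ⟩
      have hf := (hfix σ hσ).mp hdσ
      nlinarith [sq_nonneg (σ ^ 2 - c), sq_nonneg σ, mul_pos hσ hσ]
    · intro hge
      have hs : Real.sqrt (z ^ 2 - 4 * c) ^ 2 = z ^ 2 - 4 * c :=
        Real.sq_sqrt (by linarith)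
      have hsnn : 0 ≤ Real.sqrt (z ^ 2 - 4 * c) := Real.sqrt_nonneg _
      refine ⟨fp, by positivity, (hfix fp (by positivity)).mpr ?_⟩
      show z * ((z + Real.sqrt (z ^ 2 - 4 * c)) / 2) =
        ((z + Real.sqrt (z ^ 2 - 4 * c)) / 2) ^ 2 + c
      nlinarith [hs]
  · -- exact fixed points
    intro hgt σ hσ
    have hs : Real.sqrt (z ^ 2 - 4 * c) ^ 2 = z ^ 2 - 4 * c :=
      Real.sq_sqrt (by linarith)
    rw [hfix σ hσ]
    have hq : (z * σ = σ ^ 2 + c) ↔ 1 * (σ * σ) + (-z) * σ + c = 0 := by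
      constructor <;> intro h <;> nlinarith [h]
    have hd : discrim 1 (-z) c =
        Real.sqrt (z ^ 2 - 4 * c) * Real.sqrt (z ^ 2 - 4 * c) := by
      rw [discrim]; linear_combination -hs
    rw [hq, quadratic_eq_zero_iff (by norm_num) hd σ]
    constructor
    · rintro (h | h)
      · left; rw [h]; show _ = (z + _) / 2; ring_nf
      · right; rw [h]; show _ = (z - _) / 2; ring_nf
    · rintro (h | h)
      · left; rw [h]; show (z + _) / 2 = _; ring_nf
      · right; rw [h]; show (z - _) / 2 = _; ring_nf
  · -- attractive / repelling
    intro hgt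
    have hs : Real.sqrt (z ^ 2 - 4 * c) ^ 2 = z ^ 2 - 4 * c :=
      Real.sq_sqrt (by linarith)
    have hspos : 0 < Real.sqrt (z ^ 2 - 4 * c) :=
      Real.sqrt_pos.mpr (by linarith)
    have hslt : Real.sqrt (z ^ 2 - 4 * c) < z := by nlinarith [hs, hspos]
    have hfp : 0 < fp := by positivity
    have hfm : 0 < fm := by
      show 0 < (z - Real.sqrt (z ^ 2 - 4 * c)) / 2; linarith
    have hfixp : z * fp = fp ^ 2 + c := by
      show z * ((z + _) / 2) = ((z + _) / 2) ^ 2 + c; nlinarith [hs]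
    have hfixm : z * fm = fm ^ 2 + c := by
      show z * ((z - _) / 2) = ((z - _) / 2) ^ 2 + c; nlinarith [hs]
    have hfp2 : c < fp ^ 2 := by
      show c < ((z + _) / 2) ^ 2; nlinarith [hs, hspos, hslt]
    have hfm2 : fm ^ 2 < c := by
      show ((z - _) / 2) ^ 2 < c; nlinarith [hs, hspos, hslt]
    constructor
    · rw [hderivfix fp hfp hfixp, abs_of_pos (by positivity),
        div_lt_one (by positivity)]
      linarith
    · rw [hderivfix fm hfm hfixm, abs_of_pos (by positivity),
        gt_iff_lt, lt_div_iff₀ (by positivity)]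
      linarith
  · -- degenerate case
    intro heq
    have hc' : (z / 2) ^ 2 = c := by nlinarith
    refine ⟨fun σ hσ => ?_, hc'⟩
    rw [hfix σ hσ]
    constructor
    · intro h; nlinarith [sq_nonneg (σ - z / 2)]
    · intro h; rw [h]; nlinarith
  · -- filter value at attractive fixed points
    intro σ hσ hdσ hab
    have hf := (hfix σ hσ).mp hdσ
    rw [hderivfix σ hσ hf, abs_of_pos (by positivity),
      div_le_one (by positivity)] at hab
    have hσ2 : c ≤ σ ^ 2 := by linarith
    have hx : 1 + c / σ ^ 2 ≤ 2 := by
      have : c / σ ^ 2 ≤ 1 := by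
        rw [div_le_one (by positivity)]; exact hσ2
      linarith
    have hxpos : 0 < 1 + c / σ ^ 2 := by positivity
    rw [one_div]
    exact inv_anti₀ hxpos hx
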